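/- Let S be a commutative p-scheme of order p^4 such that n_{O_θ(S)} = p^2, n_{O^θ(S)} = p^3, and n_t = p^2 for every t ∈ O^θ(S) ∖ O_θ(S). Then n_s ≥ p^2 for every s ∈ S ∖ O^θ(S). -/

import Mathlib

open Set

/-- The diagonal relation `1_X` on a set `X`. -/
def schemeDiag (X : Type*) : Set (X × X) := {p | p.1 = p.2}

/-- The transpose `s*` of a relation `s`. -/
def schemeTransp {X : Type*} (s : Set (X × X)) : Set (X × X) := {p | (p.2, p.1) ∈ s}

/-- An association scheme on a finite set `X`: a partition of `X × X` containing the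
diagonal, closed under transposition, with well-defined intersection numbers `a s t u`. -/
structure AssocScheme (X : Type*) [Fintype X] where
  rels : Set (Set (X × X))
  partition : ∀ p : X × X, ∃! s, s ∈ rels ∧ p ∈ s
  diag_mem : schemeDiag X ∈ rels
  transpose_mem : ∀ s ∈ rels, schemeTransp s ∈ rels
  a : Set (X × X) → Set (X × X) → Set (X × X) → ℕ
  a_spec : ∀ s ∈ rels, ∀ t ∈ rels, ∀ u ∈ rels, ∀ x y : X, (x, y) ∈ u →
    a s t u = Nat.card {z : X | (x, z) ∈ s ∧ (z, y) ∈ t}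

namespace AssocScheme

variable {X : Type*} [Fintype X] (S : AssocScheme X)

/-- The valency `n_s = a_{s s* 1_X}` of a relation. -/
def val (s : Set (X × X)) : ℕ := S.a s (schemeTransp s) (schemeDiag X)

/-- The complex product `uv` of two relations. -/
def cprod (u v : Set (X × X)) : Set (Set (X × X)) := {s ∈ S.rels | S.a u v s ≠ 0}

/-- The complex product `PQ` of two sets of relations. -/
def sprod (P Q : Set (Set (X × X))) : Set (Set (X × X)) :=
  {s ∈ S.rels | ∃ p ∈ P, ∃ q ∈ Q, S.a p q s ≠ 0}

/-- A (nonempty) closed subset of the scheme. -/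
def IsClosedSubset (T : Set (Set (X × X))) : Prop :=
  T.Nonempty ∧ T ⊆ S.rels ∧ ∀ u ∈ T, ∀ v ∈ T, S.cprod u v ⊆ T

/-- The thin radical `O_θ(S)`: the set of relations of valency 1. -/
def thinRadical : Set (Set (X × X)) := {s ∈ S.rels | S.val s = 1}

/-- The smallest closed subset containing all `t* t` for `t ∈ T`. -/
def resOf (T : Set (Set (X × X))) : Set (Set (X × X)) :=
  ⋂₀ {U | S.IsClosedSubset U ∧ ∀ t ∈ T, S.cprod (schemeTransp t) t ⊆ U}

/-- The thin residue `O^θ(S) = ⟨⋃_{s ∈ S} s* s⟩`. -/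
def thinResidue : Set (Set (X × X)) := S.resOf S.rels

/-- The order `n_U = ∑_{u ∈ U} n_u` of a set of relations. -/
noncomputable def nOrd (U : Set (Set (X × X))) : ℕ := ∑ᶠ u ∈ U, S.val u

/-- Commutativity of the scheme. -/
def IsCommutative : Prop :=
  ∀ u ∈ S.rels, ∀ v ∈ S.rels, ∀ w ∈ S.rels, S.a u v w = S.a v u w

/-- `S` is a `p`-scheme: `|X|` and all valencies are powers of the prime `p`. -/
def IsPScheme (p : ℕ) : Prop :=
  p.Prime ∧ (∃ n, Fintype.card X = p ^ n) ∧ ∀ s ∈ S.rels, ∃ i, S.val s = p ^ i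

/-- `S` is schurian: its relations are the orbitals of a transitive permutation group. -/
def IsSchurian : Prop :=
  ∃ G : Subgroup (Equiv.Perm X), (∀ x y : X, ∃ g ∈ G, g x = y) ∧
    S.rels = {o | ∃ q : X × X, o = {r : X × X | ∃ g ∈ G, (g q.1, g q.2) = r}}

/-- The right stabilizer `R(s) = {t | st = s}`. -/
def Rstab (s : Set (X × X)) : Set (Set (X × X)) := {t ∈ S.rels | S.cprod s t = {s}}

/-- The left stabilizer `L(s) = {t | ts = s}`. -/
def Lstab (s : Set (X × X)) : Set (Set (X × X)) := {t ∈ S.rels | S.cprod t s = {s}}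

/-- A faithful map: `r(x,y) = r(φ x, φ y)` for all `x, y`. -/
def IsFaithful (φ : X → X) : Prop :=
  ∀ x y : X, ∀ s ∈ S.rels, (x, y) ∈ s → (φ x, φ y) ∈ s

/-- An automorphism of the scheme. -/
def IsAutomorphism (φ : X → X) : Prop := Function.Bijective φ ∧ S.IsFaithful φ

/-- The quotient scheme `S // T` is isomorphic to the cyclic group `C_m`:
there is a surjection `f : X → ZMod m` whose difference map classifies the
double-coset relations `T s T`. -/
def QuotIsoCyclic (T : Set (Set (X × X))) (m : ℕ) : Prop :=
  ∃ f : X → ZMod m, Function.Surjective f ∧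
    ∀ x y x' y' : X, (f y - f x = f y' - f x') ↔
      ∃ s ∈ S.rels, (x, y) ∈ s ∧ ∃ s' ∈ S.sprod (S.sprod T {s}) T, (x', y') ∈ s'

/-- A thin closed subset `T` is isomorphic, as a group under the relational
product, to the additive group `G`. -/
def ThinGroupIso (T : Set (Set (X × X))) (G : Type*) [AddGroup G] : Prop :=
  (∀ t ∈ T, S.val t = 1) ∧ ∃ f : Set (X × X) → G, Set.BijOn f T Set.univ ∧
    ∀ t1 ∈ T, ∀ t2 ∈ T, ∀ u, S.cprod t1 t2 = {u} → f u = f t1 + f t2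

end AssocScheme

/-- The set of relations of the wreath product `F ≀ H`. -/
def wreathRels {W Y : Type*} [Fintype W] [Fintype Y]
    (F : AssocScheme W) (H : AssocScheme Y) : Set (Set ((W × Y) × (W × Y))) :=
  {r | ∃ f ∈ F.rels, r = {p : (W × Y) × (W × Y) | p.1.2 = p.2.2 ∧ (p.1.1, p.2.1) ∈ f}} ∪
  {r | ∃ h ∈ H.rels, h ≠ schemeDiag Y ∧
    r = {p : (W × Y) × (W × Y) | (p.1.2, p.2.2) ∈ h}}
set_option linter.unusedSectionVars false
namespace AssocScheme

open scoped Classical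

variable {X : Type*} [Fintype X] {S : AssocScheme X}

lemma transp_transp (s : Set (X × X)) : schemeTransp (schemeTransp s) = s := rfl

lemma transp_diag : schemeTransp (schemeDiag X) = schemeDiag X := by
  ext p; exact comm

lemma mem_transp {s : Set (X × X)} {x y : X} : (x, y) ∈ schemeTransp s ↔ (y, x) ∈ s :=
  Iff.rfl

lemma rel_exists (S : AssocScheme X) (x y : X) : ∃ s ∈ S.rels, (x, y) ∈ s := by
  obtain ⟨s, hs, -⟩ := S.partition (x, y)
  exact ⟨s, hs.1, hs.2⟩

lemma rel_unique {s t : Set (X × X)} (hs : s ∈ S.rels) (ht : t ∈ S.rels) {x y : X}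
    (h1 : (x, y) ∈ s) (h2 : (x, y) ∈ t) : s = t := by
  obtain ⟨u, -, hu⟩ := S.partition (x, y)
  rw [hu s ⟨hs, h1⟩, hu t ⟨ht, h2⟩]

/-- The row of `u` at `x`. -/
noncomputable def row (u : Set (X × X)) (x : X) : Finset X :=
  Finset.univ.filter (fun z => (x, z) ∈ u)

lemma mem_row {u : Set (X × X)} {x z : X} : z ∈ row u x ↔ (x, z) ∈ u := by
  simp [row]

lemma natCard_setOf_eq_card_filter (P : X → Prop) :
    Nat.card {z : X | P z} = (Finset.univ.filter P).card := by
  rw [Nat.card_eq_fintype_card]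
  simp [Fintype.card_subtype]

lemma val_eq_row (hu : u ∈ S.rels) (x : X) : S.val u = (row u x).card := by
  have := S.a_spec u hu (schemeTransp u) (S.transpose_mem u hu) (schemeDiag X) S.diag_mem x x rfl
  rw [val, this]
  have : {z : X | (x, z) ∈ u ∧ (z, x) ∈ schemeTransp u} = {z : X | (x, z) ∈ u} := by
    ext z; simp [mem_transp, and_self_iff]
  rw [this, natCard_setOf_eq_card_filter]
  rfl

lemma val_pos {p : ℕ} (hp : S.IsPScheme p) {u : Set (X × X)} (hu : u ∈ S.rels) :
    1 ≤ S.val u := by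
  obtain ⟨i, hi⟩ := hp.2.2 u hu
  rw [hi]
  exact Nat.one_le_pow _ _ hp.1.pos

lemma row_nonempty {p : ℕ} (hp : S.IsPScheme p) {u : Set (X × X)} (hu : u ∈ S.rels)
    (x : X) : ∃ z, (x, z) ∈ u := by
  have h := S.val_pos hp hu
  rw [val_eq_row hu x] at h
  obtain ⟨z, hz⟩ := Finset.card_pos.mp h
  exact ⟨z, mem_row.mp hz⟩

lemma exists_mid {u v w : Set (X × X)} (hu : u ∈ S.rels) (hv : v ∈ S.rels)
    (hw : w ∈ S.rels) (ha : S.a u v w ≠ 0) {x y : X} (hxy : (x, y) ∈ w) :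
    ∃ z, (x, z) ∈ u ∧ (z, y) ∈ v := by
  rw [S.a_spec u hu v hv w hw x y hxy] at ha
  obtain ⟨⟨z, hz⟩, -⟩ := Nat.card_ne_zero.mp ha
  exact ⟨z, hz⟩

lemma a_ne_zero {u v w : Set (X × X)} (hu : u ∈ S.rels) (hv : v ∈ S.rels)
    (hw : w ∈ S.rels) {x y z : X} (hxy : (x, y) ∈ w) (h1 : (x, z) ∈ u)
    (h2 : (z, y) ∈ v) : S.a u v w ≠ 0 := by
  rw [S.a_spec u hu v hv w hw x y hxy]
  exact Nat.card_ne_zero.mpr ⟨⟨z, h1, h2⟩, Subtype.finite⟩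

lemma mem_cprod {u v w : Set (X × X)} : w ∈ S.cprod u v ↔ w ∈ S.rels ∧ S.a u v w ≠ 0 :=
  Iff.rfl

lemma cprod_subset_rels (u v : Set (X × X)) : S.cprod u v ⊆ S.rels := fun _ h => h.1

lemma exists_cprod_mem {u v : Set (X × X)} (hu : u ∈ S.rels) (hv : v ∈ S.rels)
    {x z y : X} (h1 : (x, z) ∈ u) (h2 : (z, y) ∈ v) :
    ∃ w ∈ S.cprod u v, (x, y) ∈ w := by
  obtain ⟨w, hw, hxy⟩ := S.rel_exists x y
  exact ⟨w, ⟨hw, S.a_ne_zero hu hv hw hxy h1 h2⟩, hxy⟩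

/-- relational composition -/
def rcomp (u v : Set (X × X)) : Set (X × X) := {q | ∃ z, (q.1, z) ∈ u ∧ (z, q.2) ∈ v}

lemma mem_rcomp {u v : Set (X × X)} {x y : X} :
    (x, y) ∈ rcomp u v ↔ ∃ z, (x, z) ∈ u ∧ (z, y) ∈ v := Iff.rfl

lemma rcomp_assoc (u v w : Set (X × X)) : rcomp (rcomp u v) w = rcomp u (rcomp v w) := by
  ext ⟨x, y⟩
  constructor
  · rintro ⟨z, ⟨c, h1, h2⟩, h3⟩
    exact ⟨c, h1, z, h2, h3⟩
  · rintro ⟨c, h1, z, h2, h3⟩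
    exact ⟨z, ⟨c, h1, h2⟩, h3⟩

lemma rcomp_mono {u u' v v' : Set (X × X)} (h1 : u ⊆ u') (h2 : v ⊆ v') :
    rcomp u v ⊆ rcomp u' v' := by
  rintro ⟨x, y⟩ ⟨z, hz1, hz2⟩
  exact ⟨z, h1 hz1, h2 hz2⟩

lemma rcomp_diag_right (u : Set (X × X)) : rcomp u (schemeDiag X) = u := by
  ext ⟨x, y⟩
  constructor
  · rintro ⟨z, hz, (h : z = y)⟩; rwa [h] at hz
  · intro h; exact ⟨y, h, rfl⟩

lemma rcomp_diag_left (u : Set (X × X)) : rcomp (schemeDiag X) u = u := by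
  ext ⟨x, y⟩
  constructor
  · rintro ⟨z, (h : x = z), hz⟩; rwa [← h] at hz
  · intro h; exact ⟨x, rfl, h⟩

lemma mem_radical {e : Set (X × X)} :
    e ∈ S.thinRadical ↔ e ∈ S.rels ∧ S.val e = 1 := Iff.rfl

lemma thin_unique {e : Set (X × X)} (he : e ∈ S.thinRadical) (x : X) :
    ∃! y, (x, y) ∈ e := by
  have h : (row e x).card = 1 := by rw [← val_eq_row he.1 x]; exact he.2
  obtain ⟨y, hy⟩ := Finset.card_eq_one.mp h
  refine ⟨y, ?_, fun z hz => ?_⟩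
  · have : y ∈ row e x := hy ▸ Finset.mem_singleton_self y
    exact mem_row.mp this
  · have : z ∈ row e x := mem_row.mpr hz
    rw [hy] at this
    exact Finset.mem_singleton.mp this
lemma sum_row_card (u : Set (X × X)) :
    ∑ x : X, (row u x).card = (Finset.univ.filter (fun q : X × X => q ∈ u)).card := by
  rw [Finset.card_eq_sum_card_fiberwise
    (f := Prod.fst) (t := Finset.univ) (fun q _ => Finset.mem_univ _)]
  refine Finset.sum_congr rfl fun x _ => ?_
  refine (Finset.card_bij (fun q _ => q.2) ?_ ?_ ?_).symm
  · rintro ⟨a, b⟩ hq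
    simp only [Finset.mem_filter, Finset.mem_univ, true_and] at hq
    exact mem_row.mpr (hq.2 ▸ hq.1)
  · rintro ⟨a, b⟩ ha ⟨c, d⟩ hc h
    simp only [Finset.mem_filter, Finset.mem_univ, true_and] at ha hc
    simp only at h
    rw [Prod.mk.injEq]
    exact ⟨ha.2.trans hc.2.symm, h⟩
  · intro b hb
    refine ⟨(x, b), ?_, rfl⟩
    simp only [Finset.mem_filter, Finset.mem_univ, true_and]
    exact ⟨mem_row.mp hb, by trivial⟩

lemma sum_col_card (u : Set (X × X)) :
    ∑ y : X, (row (schemeTransp u) y).card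
      = (Finset.univ.filter (fun q : X × X => q ∈ u)).card := by
  rw [Finset.card_eq_sum_card_fiberwise
    (f := Prod.snd) (t := Finset.univ) (fun q _ => Finset.mem_univ _)]
  refine Finset.sum_congr rfl fun y _ => ?_
  refine (Finset.card_bij (fun q _ => q.1) ?_ ?_ ?_).symm
  · rintro ⟨a, b⟩ hq
    simp only [Finset.mem_filter, Finset.mem_univ, true_and] at hq
    exact mem_row.mpr (mem_transp.mpr (hq.2 ▸ hq.1))
  · rintro ⟨a, b⟩ ha ⟨c, d⟩ hc h
    simp only [Finset.mem_filter, Finset.mem_univ, true_and] at ha hc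
    simp only at h
    rw [Prod.mk.injEq]
    exact ⟨h, ha.2.trans hc.2.symm⟩
  · intro b hb
    refine ⟨(b, y), ?_, rfl⟩
    simp only [Finset.mem_filter, Finset.mem_univ, true_and]
    exact ⟨mem_transp.mp (mem_row.mp hb), by trivial⟩

lemma val_transp (hX : Nonempty X) {u : Set (X × X)} (hu : u ∈ S.rels) :
    S.val (schemeTransp u) = S.val u := by
  have h1 : ∑ x : X, (row u x).card = Fintype.card X * S.val u := by
    rw [Finset.sum_congr rfl fun x _ => (val_eq_row hu x).symm]
    simp [Finset.sum_const, mul_comm]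
  have h2 : ∑ y : X, (row (schemeTransp u) y).card
      = Fintype.card X * S.val (schemeTransp u) := by
    rw [Finset.sum_congr rfl fun y _ => (val_eq_row (S.transpose_mem u hu) y).symm]
    simp [Finset.sum_const, mul_comm]
  have := (h2.symm.trans (sum_col_card u)).trans ((sum_row_card u).symm.trans h1)
  exact Nat.eq_of_mul_eq_mul_left Fintype.card_pos this

lemma transp_mem_radical (hX : Nonempty X) {e : Set (X × X)} (he : e ∈ S.thinRadical) :
    schemeTransp e ∈ S.thinRadical :=
  ⟨S.transpose_mem e he.1, (S.val_transp hX he.1).trans he.2⟩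

lemma rcomp_transp_self (hX : Nonempty X) {e : Set (X × X)} (he : e ∈ S.thinRadical) :
    rcomp e (schemeTransp e) = schemeDiag X := by
  have he' := S.transp_mem_radical hX he
  ext ⟨x, y⟩
  constructor
  · rintro ⟨z, h1, h2⟩
    obtain ⟨w, -, hw⟩ := S.thin_unique he' z
    exact (hw x (mem_transp.mpr h1)).trans (hw y h2).symm
  · rintro (h : x = y)
    obtain ⟨z, hz, -⟩ := S.thin_unique he x
    exact ⟨z, hz, mem_transp.mpr (h ▸ hz)⟩

lemma transp_self_rcomp (hX : Nonempty X) {e : Set (X × X)} (he : e ∈ S.thinRadical) :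
    rcomp (schemeTransp e) e = schemeDiag X := by
  have := S.rcomp_transp_self hX (S.transp_mem_radical hX he)
  rwa [transp_transp] at this

lemma cprod_thin {p : ℕ} (hp : S.IsPScheme p) (hX : Nonempty X)
    {u e : Set (X × X)} (hu : u ∈ S.rels) (he : e ∈ S.thinRadical) :
    S.cprod u e = {rcomp u e} := by
  have he' := S.transp_mem_radical hX he
  -- every member of the complex product is contained in the composition
  have hsub : ∀ w ∈ S.cprod u e, w ⊆ rcomp u e := by
    rintro w hw ⟨x, y⟩ hxy
    exact S.exists_mid hu he.1 hw.1 hw.2 hxy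
  -- every member equals the composition
  have heq : ∀ w ∈ S.cprod u e, w = rcomp u e := by
    intro w hw
    -- u belongs to cprod w e*
    obtain ⟨x0⟩ := id hX
    obtain ⟨y0, hy0⟩ := S.row_nonempty hp hw.1 x0
    obtain ⟨z0, hz1, hz2⟩ := S.exists_mid hu he.1 hw.1 hw.2 hy0
    have hau : S.a w (schemeTransp e) u ≠ 0 :=
      S.a_ne_zero hw.1 he'.1 hu hz1 hy0 (mem_transp.mpr hz2)
    -- u ⊆ rcomp w e*
    have husub : u ⊆ rcomp w (schemeTransp e) := by
      rintro ⟨x, z⟩ hxz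
      exact S.exists_mid hw.1 he'.1 hu hau hxz
    -- rcomp w e* ⊆ u
    have hwsub : rcomp w (schemeTransp e) ⊆ u := by
      have h1 : rcomp w (schemeTransp e) ⊆ rcomp (rcomp u e) (schemeTransp e) :=
        rcomp_mono (hsub w hw) (subset_refl _)
      rwa [rcomp_assoc, S.rcomp_transp_self hX he, rcomp_diag_right] at h1
    have hue : rcomp w (schemeTransp e) = u := subset_antisymm hwsub husub
    calc w = rcomp w (schemeDiag X) := (rcomp_diag_right w).symm
      _ = rcomp w (rcomp (schemeTransp e) e) := by rw [S.transp_self_rcomp hX he]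
      _ = rcomp (rcomp w (schemeTransp e)) e := (rcomp_assoc _ _ _).symm
      _ = rcomp u e := by rw [hue]
  -- the complex product is nonempty
  obtain ⟨x0⟩ := id hX
  obtain ⟨z0, hz0⟩ := S.row_nonempty hp hu x0
  obtain ⟨y0, hy0, -⟩ := S.thin_unique he z0
  obtain ⟨w0, hw0, hxy0⟩ := S.exists_cprod_mem hu he.1 hz0 hy0
  ext w
  simp only [Set.mem_singleton_iff]
  constructor
  · exact fun hw => heq w hw
  · rintro rfl
    rwa [← heq w0 hw0]

lemma rcomp_thin_mem {p : ℕ} (hp : S.IsPScheme p) (hX : Nonempty X)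
    {u e : Set (X × X)} (hu : u ∈ S.rels) (he : e ∈ S.thinRadical) :
    rcomp u e ∈ S.rels ∧ rcomp u e ∈ S.cprod u e := by
  have h := S.cprod_thin hp hX hu he
  have : rcomp u e ∈ S.cprod u e := by rw [h]; rfl
  exact ⟨this.1, this⟩

lemma val_rcomp_thin (hX : Nonempty X) {u e : Set (X × X)} (hu : u ∈ S.rels)
    (he : e ∈ S.thinRadical) (hm : rcomp u e ∈ S.rels) :
    S.val (rcomp u e) = S.val u := by
  obtain ⟨x⟩ := id hX
  have he' := S.transp_mem_radical hX he
  rw [val_eq_row hu x, val_eq_row hm x]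
  refine (Finset.card_bij (fun z _ => (S.thin_unique he z).choose) ?_ ?_ ?_).symm
  · intro z hz
    exact mem_row.mpr ⟨z, mem_row.mp hz, (S.thin_unique he z).choose_spec.1⟩
  · intro z1 h1 z2 h2 h
    simp only at h
    obtain ⟨w, -, hw⟩ := S.thin_unique he' (S.thin_unique he z2).choose
    have e1 := (S.thin_unique he z1).choose_spec.1
    have e2 := (S.thin_unique he z2).choose_spec.1
    rw [h] at e1
    exact (hw z1 (mem_transp.mpr e1)).trans (hw z2 (mem_transp.mpr e2)).symm
  · intro y hy
    obtain ⟨z, hz1, hz2⟩ := mem_row.mp hy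
    refine ⟨z, mem_row.mpr hz1, ?_⟩
    exact ((S.thin_unique he z).choose_spec.2 y hz2).symm
lemma a_eq_card {u v w : Set (X × X)} (hu : u ∈ S.rels) (hv : v ∈ S.rels)
    (hw : w ∈ S.rels) {x y : X} (hxy : (x, y) ∈ w) :
    S.a u v w = (Finset.univ.filter (fun z => (x, z) ∈ u ∧ (z, y) ∈ v)).card := by
  rw [S.a_spec u hu v hv w hw x y hxy, natCard_setOf_eq_card_filter]
  congr

lemma sum_a_val_le {u v : Set (X × X)} (hu : u ∈ S.rels) (hv : v ∈ S.rels)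
    (F : Finset (Set (X × X))) (hF : ∀ w ∈ F, w ∈ S.rels) (x : X) :
    ∑ w ∈ F, S.a u v w * S.val w ≤ S.val u * S.val v := by
  classical
  set P : Finset (X × X) :=
    Finset.univ.filter (fun q => (x, q.1) ∈ u ∧ (q.1, q.2) ∈ v) with hP
  set Pw : Set (X × X) → Finset (X × X) :=
    fun w => P.filter (fun q => (x, q.2) ∈ w) with hPw
  have key1 : ∀ w ∈ F, (Pw w).card = S.a u v w * S.val w := by
    intro w hwF
    have hw := hF w hwF
    rw [Finset.card_eq_sum_card_fiberwise (f := Prod.snd) (t := row w x)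
      (fun q hq => by
        exact mem_row.mpr (Finset.mem_filter.mp hq).2)]
    rw [val_eq_row hw x, Finset.sum_congr rfl
      (fun y hy => ?_), Finset.sum_const, smul_eq_mul, mul_comm]
    · rw [S.a_eq_card hu hv hw (mem_row.mp hy)]
      refine Finset.card_bij (fun q _ => q.1) ?_ ?_ ?_
      · intro q hq
        simp only [hPw, hP, Finset.mem_filter, Finset.mem_univ, true_and] at hq ⊢
        obtain ⟨⟨⟨h1, h2⟩, h3⟩, h4⟩ := hq
        exact ⟨h1, h4 ▸ h2⟩
      · rintro ⟨a1, b1⟩ h1 ⟨a2, b2⟩ h2 h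
        simp only [hPw, hP, Finset.mem_filter, Finset.mem_univ, true_and] at h1 h2
        simp only at h
        rw [Prod.mk.injEq]
        exact ⟨h, h1.2.trans h2.2.symm⟩
      · intro z hz
        simp only [Finset.mem_filter, Finset.mem_univ, true_and] at hz
        refine ⟨(z, y), ?_, rfl⟩
        simp only [hPw, hP, Finset.mem_filter, Finset.mem_univ, true_and]
        exact ⟨⟨⟨hz.1, hz.2⟩, mem_row.mp hy⟩, by trivial⟩
  have key2 : ∑ w ∈ F, (Pw w).card ≤ P.card := by
    rw [← Finset.card_biUnion]
    · exact Finset.card_le_card (Finset.biUnion_subset.mpr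
        (fun w _ => Finset.filter_subset _ _))
    · intro w1 hw1 w2 hw2 hne
      simp only [Finset.disjoint_left]
      intro q hq1 hq2
      simp only [hPw, Finset.mem_filter] at hq1 hq2
      exact hne (S.rel_unique (hF w1 hw1) (hF w2 hw2) hq1.2 hq2.2)
  have key3 : P.card = S.val u * S.val v := by
    rw [Finset.card_eq_sum_card_fiberwise (f := Prod.fst) (t := row u x)
      (fun q hq => by
        exact mem_row.mpr (Finset.mem_filter.mp hq).2.1)]
    rw [val_eq_row hu x, Finset.sum_congr rfl (fun z hz => ?_),
      Finset.sum_const, smul_eq_mul]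
    rw [val_eq_row hv z]
    refine Finset.card_bij (fun q _ => q.2) ?_ ?_ ?_
    · intro q hq
      simp only [hP, Finset.mem_filter, Finset.mem_univ, true_and] at hq ⊢
      exact mem_row.mpr (hq.2 ▸ hq.1.2)
    · rintro ⟨a1, b1⟩ h1 ⟨a2, b2⟩ h2 h
      simp only [hP, Finset.mem_filter, Finset.mem_univ, true_and] at h1 h2
      simp only at h
      rw [Prod.mk.injEq]
      exact ⟨h1.2.trans h2.2.symm, h⟩
    · intro y hy
      refine ⟨(z, y), ?_, rfl⟩
      simp only [hP, Finset.mem_filter, Finset.mem_univ, true_and]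
      exact ⟨⟨mem_row.mp hz, mem_row.mp hy⟩, by trivial⟩
  calc ∑ w ∈ F, S.a u v w * S.val w = ∑ w ∈ F, (Pw w).card :=
        (Finset.sum_congr rfl (fun w hw => (key1 w hw).symm))
    _ ≤ P.card := key2
    _ = S.val u * S.val v := key3

lemma radical_closed {p : ℕ} (hp : S.IsPScheme p) (hX : Nonempty X)
    {e f : Set (X × X)} (he : e ∈ S.thinRadical) (hf : f ∈ S.thinRadical) :
    S.cprod e f ⊆ S.thinRadical := by
  rw [S.cprod_thin hp hX he.1 hf]
  intro w hw
  rw [Set.mem_singleton_iff] at hw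
  subst hw
  obtain ⟨hm, -⟩ := S.rcomp_thin_mem hp hX he.1 hf
  exact ⟨hm, (S.val_rcomp_thin hX he.1 hf hm).trans he.2⟩

lemma residue_subset_rels : S.thinResidue ⊆ S.rels := by
  intro t ht
  exact Set.mem_sInter.mp ht S.rels ⟨⟨⟨schemeDiag X, S.diag_mem⟩, subset_refl _,
    fun u _ v _ => S.cprod_subset_rels u v⟩, fun t _ => S.cprod_subset_rels _ _⟩

lemma cprod_transp_self_subset_residue {u : Set (X × X)} (hu : u ∈ S.rels) :
    S.cprod (schemeTransp u) u ⊆ S.thinResidue := by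
  intro w hw
  exact Set.mem_sInter.mpr (fun U hU => hU.2 u hu hw)

lemma residue_closed_prod {u v : Set (X × X)} (hu : u ∈ S.thinResidue)
    (hv : v ∈ S.thinResidue) : S.cprod u v ⊆ S.thinResidue := by
  intro w hw
  exact Set.mem_sInter.mpr (fun U hU => hU.1.2.2 u (Set.mem_sInter.mp hu U hU)
    v (Set.mem_sInter.mp hv U hU) hw)

lemma diag_mem_residue (hX : Nonempty X) : schemeDiag X ∈ S.thinResidue := by
  obtain ⟨x⟩ := id hX
  have h : schemeDiag X ∈ S.cprod (schemeTransp (schemeDiag X)) (schemeDiag X) := by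
    refine ⟨S.diag_mem, S.a_ne_zero ?_ S.diag_mem S.diag_mem
      (show (x, x) ∈ schemeDiag X from rfl) (show (x, x) ∈ schemeTransp (schemeDiag X) from rfl)
      (show (x, x) ∈ schemeDiag X from rfl)⟩
    rw [transp_diag]; exact S.diag_mem
  exact S.cprod_transp_self_subset_residue S.diag_mem h

lemma transp_mem_cprod_flip {p : ℕ} (hp : S.IsPScheme p) (hX : Nonempty X)
    {u v w : Set (X × X)} (hu : u ∈ S.rels) (hv : v ∈ S.rels)
    (hw : w ∈ S.cprod u v) :
    schemeTransp w ∈ S.cprod (schemeTransp v) (schemeTransp u) := by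
  obtain ⟨x⟩ := id hX
  obtain ⟨y, hy⟩ := S.row_nonempty hp hw.1 x
  obtain ⟨z, h1, h2⟩ := S.exists_mid hu hv hw.1 hw.2 hy
  exact ⟨S.transpose_mem w hw.1,
    S.a_ne_zero (S.transpose_mem v hv) (S.transpose_mem u hu) (S.transpose_mem w hw.1)
      (mem_transp.mpr hy) (mem_transp.mpr h2) (mem_transp.mpr h1)⟩

lemma transp_mem_cprod_transp_self {p : ℕ} (hp : S.IsPScheme p) (hX : Nonempty X)
    {u w : Set (X × X)} (hu : u ∈ S.rels)
    (hw : w ∈ S.cprod (schemeTransp u) u) :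
    schemeTransp w ∈ S.cprod (schemeTransp u) u := by
  obtain ⟨x⟩ := id hX
  obtain ⟨y, hy⟩ := S.row_nonempty hp hw.1 x
  obtain ⟨z, h1, h2⟩ := S.exists_mid (S.transpose_mem u hu) hu hw.1 hw.2 hy
  exact ⟨S.transpose_mem w hw.1,
    S.a_ne_zero (S.transpose_mem u hu) hu (S.transpose_mem w hw.1)
      (mem_transp.mpr hy) (mem_transp.mpr h2) (mem_transp.mp h1)⟩

lemma residue_transp_mem {p : ℕ} (hp : S.IsPScheme p) (hX : Nonempty X)
    {t : Set (X × X)} (ht : t ∈ S.thinResidue) : schemeTransp t ∈ S.thinResidue := by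
  set U : Set (Set (X × X)) := {u | u ∈ S.rels ∧ schemeTransp u ∈ S.thinResidue} with hU
  have hmem : U ∈ {U | S.IsClosedSubset U ∧ ∀ g ∈ S.rels,
      S.cprod (schemeTransp g) g ⊆ U} := by
    constructor
    · refine ⟨⟨schemeDiag X, S.diag_mem, ?_⟩, fun u hu => hu.1, ?_⟩
      · rw [transp_diag]; exact S.diag_mem_residue hX
      · intro u hu v hv w hw
        refine ⟨hw.1, ?_⟩
        have := S.transp_mem_cprod_flip hp hX hu.1 hv.1 hw
        exact S.residue_closed_prod hv.2 hu.2 this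
    · intro g hg w hw
      refine ⟨hw.1, ?_⟩
      exact S.cprod_transp_self_subset_residue hg
        (S.transp_mem_cprod_transp_self hp hX hg hw)
  exact (Set.mem_sInter.mp ht U hmem).2
lemma nOrd_eq_sum (U : Set (Set (X × X))) :
    S.nOrd U = ∑ u ∈ (Set.toFinite U).toFinset, S.val u := by
  rw [nOrd, ← finsum_mem_coe_finset, Set.Finite.coe_toFinset]

lemma card_filter_exists_rel {V : Set (Set (X × X))} (hV : V ⊆ S.rels) (x : X) :
    (Finset.univ.filter (fun y => ∃ w ∈ V, (x, y) ∈ w)).card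
      = ∑ w ∈ (Set.toFinite V).toFinset, S.val w := by
  classical
  have heq : Finset.univ.filter (fun y => ∃ w ∈ V, (x, y) ∈ w)
      = (Set.toFinite V).toFinset.biUnion (fun w => row w x) := by
    ext y
    simp only [Finset.mem_filter, Finset.mem_univ, true_and, Finset.mem_biUnion,
      Set.Finite.mem_toFinset, mem_row]
  rw [heq, Finset.card_biUnion]
  · exact Finset.sum_congr rfl fun w hw =>
      (val_eq_row (hV ((Set.toFinite V).mem_toFinset.mp hw)) x).symm
  · intro w1 hw1 w2 hw2 hne
    simp only [Finset.disjoint_left]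
    intro y hy1 hy2
    exact hne (S.rel_unique (hV ((Set.toFinite V).mem_toFinset.mp hw1))
      (hV ((Set.toFinite V).mem_toFinset.mp hw2)) (mem_row.mp hy1) (mem_row.mp hy2))

lemma nOrd_rels_eq_card (hX : Nonempty X) : S.nOrd S.rels = Fintype.card X := by
  classical
  obtain ⟨x⟩ := id hX
  rw [nOrd_eq_sum, ← S.card_filter_exists_rel (subset_refl S.rels) x]
  have : Finset.univ.filter (fun y => ∃ w ∈ S.rels, (x, y) ∈ w) = Finset.univ := by
    refine Finset.filter_true_of_mem fun y _ => S.rel_exists x y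
  rw [this, Finset.card_univ]

lemma nOrd_mono {U V : Set (Set (X × X))} (h : U ⊆ V) : S.nOrd U ≤ S.nOrd V := by
  rw [nOrd_eq_sum, nOrd_eq_sum]
  exact Finset.sum_le_sum_of_subset (by
    intro u hu
    rw [Set.Finite.mem_toFinset] at hu ⊢
    exact h hu)

lemma nOrd_dvd_card {W : Set (Set (X × X))} (hW : W ⊆ S.rels)
    (hdiag : schemeDiag X ∈ W)
    (htr : ∀ w ∈ W, schemeTransp w ∈ W)
    (hcl : ∀ u ∈ W, ∀ v ∈ W, S.cprod u v ⊆ W) :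
    S.nOrd W ∣ Fintype.card X := by
  classical
  have hsymm : ∀ x y : X, (∃ w ∈ W, (x, y) ∈ w) → (∃ w ∈ W, (y, x) ∈ w) := by
    rintro x y ⟨w, hw, hxy⟩
    exact ⟨schemeTransp w, htr w hw, mem_transp.mpr hxy⟩
  have htrans : ∀ x y z : X, (∃ w ∈ W, (x, y) ∈ w) → (∃ w ∈ W, (y, z) ∈ w) →
      (∃ w ∈ W, (x, z) ∈ w) := by
    rintro x y z ⟨w, hw, hxy⟩ ⟨v, hv, hyz⟩
    obtain ⟨w', hw', hxz⟩ := S.exists_cprod_mem (hW hw) (hW hv) hxy hyz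
    exact ⟨w', hcl w hw v hv hw', hxz⟩
  have key : ∀ x : X, (Finset.univ.filter (fun y => ∃ w ∈ W, (x, y) ∈ w)).card
      = S.nOrd W := by
    intro x
    rw [nOrd_eq_sum]
    exact S.card_filter_exists_rel hW x
  set f : X → Finset X :=
    fun x => Finset.univ.filter (fun y => ∃ w ∈ W, (x, y) ∈ w) with hf
  have hfiber : ∀ C ∈ Finset.univ.image f,
      Finset.univ.filter (fun x => f x = C) = C := by
    intro C hC
    obtain ⟨x0, -, rfl⟩ := Finset.mem_image.mp hC
    ext x
    simp only [Finset.mem_filter, Finset.mem_univ, true_and]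
    constructor
    · intro h
      have hx : x ∈ f x := by
        simp only [hf, Finset.mem_filter, Finset.mem_univ, true_and]
        exact ⟨schemeDiag X, hdiag, rfl⟩
      rwa [h] at hx
    · intro h
      have hx : ∃ w ∈ W, (x0, x) ∈ w := by
        have := h
        simp only [hf, Finset.mem_filter, Finset.mem_univ, true_and] at this
        exact this
      ext y
      simp only [hf, Finset.mem_filter, Finset.mem_univ, true_and]
      exact ⟨fun hxy => htrans x0 x y hx hxy,
        fun h0y => htrans x x0 y (hsymm x0 x hx) h0y⟩
  have hcard : Fintype.card X = ∑ C ∈ Finset.univ.image f, C.card := by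
    rw [← Finset.card_univ,
      Finset.card_eq_sum_card_fiberwise (f := f) (t := Finset.univ.image f)
        (fun x _ => Finset.mem_image_of_mem f (Finset.mem_univ x))]
    exact Finset.sum_congr rfl fun C hC => by rw [hfiber C hC]
  have h2 : ∀ C ∈ Finset.univ.image f, C.card = S.nOrd W := by
    intro C hC
    obtain ⟨x0, -, rfl⟩ := Finset.mem_image.mp hC
    exact key x0
  rw [hcard, Finset.sum_congr rfl h2, Finset.sum_const, smul_eq_mul]
  exact Dvd.intro _ (mul_comm _ _)
lemma val_diag (hX : Nonempty X) : S.val (schemeDiag X) = 1 := by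
  obtain ⟨x⟩ := id hX
  rw [val_eq_row S.diag_mem x]
  have : row (schemeDiag X) x = {x} := by
    ext z
    simp only [mem_row, Finset.mem_singleton]
    exact ⟨fun h => (show x = z from h).symm, fun h => (show x = z from h.symm)⟩
  rw [this, Finset.card_singleton]

lemma diag_mem_radical (hX : Nonempty X) : schemeDiag X ∈ S.thinRadical :=
  ⟨S.diag_mem, S.val_diag hX⟩

lemma radical_card (hX : Nonempty X) {p : ℕ}
    (hrad : S.nOrd S.thinRadical = p ^ 2) :
    (Set.toFinite S.thinRadical).toFinset.card = p ^ 2 := by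
  rw [← hrad, nOrd_eq_sum]
  rw [Finset.card_eq_sum_ones]
  refine Finset.sum_congr rfl fun e he => ?_
  rw [Set.Finite.mem_toFinset] at he
  exact he.2.symm

lemma radical_subset_residue {p : ℕ} (hp : S.IsPScheme p) (hX : Nonempty X)
    (hrad : S.nOrd S.thinRadical = p ^ 2) (hres : S.nOrd S.thinResidue = p ^ 3)
    (hval : ∀ t ∈ S.thinResidue, t ∉ S.thinRadical → S.val t = p ^ 2) :
    S.thinRadical ⊆ S.thinResidue ∧
      ((Set.toFinite S.thinResidue).toFinset.filter
        (fun t => t ∉ S.thinRadical)).card = p - 1 := by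
  classical
  have hp2 : 2 ≤ p := hp.1.two_le
  set Tf := (Set.toFinite S.thinResidue).toFinset with hTf
  set cE := (Tf.filter (fun t => t ∈ S.thinRadical)).card with hcE
  set cD := (Tf.filter (fun t => t ∉ S.thinRadical)).card with hcD
  have hsplit : p ^ 3 = cE + p ^ 2 * cD := by
    rw [← hres, nOrd_eq_sum, ← Finset.sum_filter_add_sum_filter_not Tf
      (fun t => t ∈ S.thinRadical)]
    congr 1
    · rw [hcE, Finset.card_eq_sum_ones]
      exact Finset.sum_congr rfl fun e he => (Finset.mem_filter.mp he).2.2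
    · rw [hcD, Finset.card_eq_sum_ones, Finset.mul_sum]
      refine Finset.sum_congr rfl fun t ht => ?_
      obtain ⟨ht1, ht2⟩ := Finset.mem_filter.mp ht
      rw [Set.Finite.mem_toFinset] at ht1
      rw [hval t ht1 ht2, mul_one]
  have hE1 : 1 ≤ cE := by
    refine Finset.card_pos.mpr ⟨schemeDiag X, ?_⟩
    rw [Finset.mem_filter, Set.Finite.mem_toFinset]
    exact ⟨S.diag_mem_residue hX, S.diag_mem_radical hX⟩
  have hEle : cE ≤ p ^ 2 := by
    rw [← S.radical_card hX hrad]
    refine Finset.card_le_card ?_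
    intro t ht
    rw [Set.Finite.mem_toFinset]
    exact (Finset.mem_filter.mp ht).2
  have hdvd : p ^ 2 ∣ cE := by
    have h1 : p ^ 2 ∣ p ^ 3 := pow_dvd_pow p (by norm_num)
    have h2 : cE = p ^ 3 - p ^ 2 * cD := by omega
    rw [h2]
    exact Nat.dvd_sub h1 (Dvd.intro cD rfl)
  have hcEeq : cE = p ^ 2 := by
    have := Nat.le_of_dvd (by omega) hdvd
    omega
  have hsub : S.thinRadical ⊆ S.thinResidue := by
    have heq : Tf.filter (fun t => t ∈ S.thinRadical)
        = (Set.toFinite S.thinRadical).toFinset := by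
      refine Finset.eq_of_subset_of_card_le ?_ ?_
      · intro t ht
        rw [Set.Finite.mem_toFinset]
        exact (Finset.mem_filter.mp ht).2
      · rw [S.radical_card hX hrad, ← hcE, hcEeq]
    intro e he
    have : e ∈ Tf.filter (fun t => t ∈ S.thinRadical) := by
      rw [heq, Set.Finite.mem_toFinset]
      exact he
    have := (Finset.mem_filter.mp this).1
    rwa [Set.Finite.mem_toFinset] at this
  refine ⟨hsub, ?_⟩
  have hppos : 0 < p ^ 2 := by positivity
  have hkey : p ^ 2 * p = p ^ 2 * (1 + cD) := by
    have h3 : p ^ 3 = p ^ 2 * p := by ring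
    rw [← h3, hsplit, hcEeq]
    ring
  have := Nat.eq_of_mul_eq_mul_left hppos hkey
  show cD = p - 1
  omega
lemma transp_rcomp (u v : Set (X × X)) :
    schemeTransp (rcomp u v) = rcomp (schemeTransp v) (schemeTransp u) := by
  ext ⟨x, y⟩
  constructor
  · rintro ⟨z, h1, h2⟩
    exact ⟨z, mem_transp.mpr h2, mem_transp.mpr h1⟩
  · rintro ⟨z, h1, h2⟩
    exact ⟨z, mem_transp.mp h2, mem_transp.mp h1⟩

lemma rcomp_radical_mem {p : ℕ} (hp : S.IsPScheme p) (hX : Nonempty X)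
    {e f : Set (X × X)} (he : e ∈ S.thinRadical) (hf : f ∈ S.thinRadical) :
    rcomp e f ∈ S.thinRadical := by
  have hm := (S.rcomp_thin_mem hp hX he.1 hf).1
  exact ⟨hm, (S.val_rcomp_thin hX he.1 hf hm).trans he.2⟩

lemma rcomp_thin_fixed {p : ℕ} (hp : S.IsPScheme p) (hX : Nonempty X)
    (hrad : S.nOrd S.thinRadical = p ^ 2) (hres : S.nOrd S.thinResidue = p ^ 3)
    (hval : ∀ t ∈ S.thinResidue, t ∉ S.thinRadical → S.val t = p ^ 2)
    {t : Set (X × X)} (ht : t ∈ S.thinResidue) (htE : t ∉ S.thinRadical) :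
    ∀ e ∈ S.thinRadical, rcomp t e = t := by
  classical
  have hp2 := hp.1.two_le
  obtain ⟨hsubE, hcD⟩ := S.radical_subset_residue hp hX hrad hres hval
  have htr := S.residue_subset_rels ht
  have hmem : ∀ e ∈ S.thinRadical, rcomp t e ∈ S.rels :=
    fun e he => (S.rcomp_thin_mem hp hX htr he).1
  have himg : ∀ e ∈ S.thinRadical,
      rcomp t e ∈ S.thinResidue ∧ rcomp t e ∉ S.thinRadical := by
    intro e he
    refine ⟨S.residue_closed_prod ht (hsubE he) (S.rcomp_thin_mem hp hX htr he).2, ?_⟩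
    intro hbad
    have h1 : S.val (rcomp t e) = 1 := hbad.2
    rw [S.val_rcomp_thin hX htr he (hmem e he), hval t ht htE] at h1
    nlinarith
  set Ef := (Set.toFinite S.thinRadical).toFinset with hEf
  set Df := (Set.toFinite S.thinResidue).toFinset.filter
    (fun u => u ∉ S.thinRadical) with hDf
  set I := Ef.image (fun e => rcomp t e) with hI
  have hIDf : I ⊆ Df := by
    intro w hw
    obtain ⟨e, he, rfl⟩ := Finset.mem_image.mp hw
    rw [Set.Finite.mem_toFinset] at he
    rw [hDf, Finset.mem_filter, Set.Finite.mem_toFinset]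
    exact ⟨(himg e he).1, (himg e he).2⟩
  -- all fibers of the map have the same cardinality
  have hfib : ∀ w ∈ I, ∀ w' ∈ I,
      (Ef.filter (fun e => rcomp t e = w)).card
        = (Ef.filter (fun e => rcomp t e = w')).card := by
    intro w hw w' hw'
    obtain ⟨e0, he0f, rfl⟩ := Finset.mem_image.mp hw
    obtain ⟨e0', he0f', rfl⟩ := Finset.mem_image.mp hw'
    have he0 : e0 ∈ S.thinRadical := (Set.Finite.mem_toFinset _).mp he0f
    have he0' : e0' ∈ S.thinRadical := (Set.Finite.mem_toFinset _).mp he0f'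
    obtain ⟨h, hhE, hcancel, hcancel', hhinv, hhinv'⟩ :
        ∃ h, h ∈ S.thinRadical ∧ rcomp e0 h = e0' ∧
          rcomp e0' (schemeTransp h) = e0 ∧
          rcomp h (schemeTransp h) = schemeDiag X ∧
          rcomp (schemeTransp h) h = schemeDiag X := by
      refine ⟨rcomp (schemeTransp e0) e0',
        S.rcomp_radical_mem hp hX (S.transp_mem_radical hX he0) he0', ?_, ?_, ?_, ?_⟩
      · rw [← rcomp_assoc, S.rcomp_transp_self hX he0, rcomp_diag_left]
      · rw [transp_rcomp, transp_transp, ← rcomp_assoc,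
          S.rcomp_transp_self hX he0', rcomp_diag_left]
      · exact S.rcomp_transp_self hX
          (S.rcomp_radical_mem hp hX (S.transp_mem_radical hX he0) he0')
      · exact S.transp_self_rcomp hX
          (S.rcomp_radical_mem hp hX (S.transp_mem_radical hX he0) he0')
    refine Finset.card_bij (fun e _ => rcomp e h) ?_ ?_ ?_
    · intro e hef
      rw [Finset.mem_filter] at hef ⊢
      have he : e ∈ S.thinRadical := (Set.Finite.mem_toFinset _).mp hef.1
      refine ⟨(Set.Finite.mem_toFinset _).mpr (S.rcomp_radical_mem hp hX he hhE), ?_⟩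
      rw [← rcomp_assoc, hef.2, rcomp_assoc, hcancel]
    · intro e1 h1 e2 h2 hee
      have h12 : rcomp (rcomp e1 h) (schemeTransp h)
          = rcomp (rcomp e2 h) (schemeTransp h) := by rw [hee]
      rwa [rcomp_assoc, rcomp_assoc, hhinv, rcomp_diag_right, rcomp_diag_right] at h12
    · intro f hf
      rw [Finset.mem_filter] at hf
      have hfE : f ∈ S.thinRadical := (Set.Finite.mem_toFinset _).mp hf.1
      have hhE' : schemeTransp h ∈ S.thinRadical := S.transp_mem_radical hX hhE
      refine ⟨rcomp f (schemeTransp h), ?_, ?_⟩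
      · rw [Finset.mem_filter]
        refine ⟨(Set.Finite.mem_toFinset _).mpr (S.rcomp_radical_mem hp hX hfE hhE'), ?_⟩
        rw [← rcomp_assoc, hf.2, rcomp_assoc, hcancel']
      · show rcomp (rcomp f (schemeTransp h)) h = f
        rw [rcomp_assoc, hhinv', rcomp_diag_right]
  -- cardinality of the radical splits into equal fibers
  have hne : (schemeDiag X) ∈ Ef := (Set.Finite.mem_toFinset _).mpr (S.diag_mem_radical hX)
  have ht0 : rcomp t (schemeDiag X) = t := rcomp_diag_right t
  have hw0 : t ∈ I := by
    rw [hI, Finset.mem_image]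
    exact ⟨schemeDiag X, hne, ht0⟩
  set c := (Ef.filter (fun e => rcomp t e = t)).card with hc
  have hsum : Ef.card = I.card * c := by
    rw [Finset.card_eq_sum_card_fiberwise (f := fun e => rcomp t e) (t := I)
      (fun e he => Finset.mem_image_of_mem _ he)]
    rw [Finset.sum_congr rfl (fun w hw => hfib w hw t hw0), Finset.sum_const, smul_eq_mul]
  have hEcard : Ef.card = p ^ 2 := S.radical_card hX hrad
  have hIdvd : I.card ∣ p ^ 2 := ⟨c, by rw [← hEcard, hsum]⟩
  have hIle : I.card ≤ p - 1 := hcD ▸ Finset.card_le_card hIDf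
  have hI1 : I.card = 1 := by
    obtain ⟨i, hile, hieq⟩ := (Nat.dvd_prime_pow hp.1).mp hIdvd
    rcases Nat.eq_zero_or_pos i with h0 | hpos
    · rw [hieq, h0, pow_zero]
    · exfalso
      have : p ≤ p ^ i := le_self_pow₀ (by omega) (by omega)
      omega
  obtain ⟨w, hwI⟩ := Finset.card_eq_one.mp hI1
  have hwt : w = t := by
    have := hwI ▸ hw0
    exact (Finset.mem_singleton.mp this).symm ▸ rfl
  intro e he
  have : rcomp t e ∈ I := Finset.mem_image_of_mem _ ((Set.Finite.mem_toFinset _).mpr he)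
  rw [hwI, Finset.mem_singleton] at this
  rw [this, hwt]
lemma natCard_row (u : Set (X × X)) (x : X) :
    Nat.card {z : X | (x, z) ∈ u} = (row u x).card :=
  natCard_setOf_eq_card_filter _

lemma residue_transp_self_sub_radical {p : ℕ} (hp : S.IsPScheme p) (hX : Nonempty X)
    (hrad : S.nOrd S.thinRadical = p ^ 2) (hres : S.nOrd S.thinResidue = p ^ 3)
    (hval : ∀ t ∈ S.thinResidue, t ∉ S.thinRadical → S.val t = p ^ 2)
    {t : Set (X × X)} (ht : t ∈ S.thinResidue) :
    S.cprod (schemeTransp t) t ⊆ S.thinRadical := by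
  classical
  have hp2 := hp.1.two_le
  have htr : t ∈ S.rels := S.residue_subset_rels ht
  by_cases htE : t ∈ S.thinRadical
  · rw [S.cprod_thin hp hX (S.transpose_mem t htr) htE, S.transp_self_rcomp hX htE]
    intro w hw
    rw [Set.mem_singleton_iff] at hw
    subst hw
    exact S.diag_mem_radical hX
  · intro r hr
    by_contra hrE
    have htT : schemeTransp t ∈ S.thinResidue := S.residue_transp_mem hp hX ht
    have hrT : r ∈ S.thinResidue := S.residue_closed_prod htT ht hr
    have hrval : S.val r = p ^ 2 := hval r hrT hrE
    have htval : S.val t = p ^ 2 := hval t ht htE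
    have htval' : S.val (schemeTransp t) = p ^ 2 := (S.val_transp hX htr).trans htval
    have hfix := S.rcomp_thin_fixed hp hX hrad hres hval ht htE
    have hae : ∀ e ∈ S.thinRadical, S.a (schemeTransp t) t e = p ^ 2 := by
      intro e he
      obtain ⟨x⟩ := id hX
      obtain ⟨b, hb⟩ := S.row_nonempty hp he.1 x
      rw [S.a_spec _ (S.transpose_mem t htr) _ htr _ he.1 x b hb]
      have hset : {z : X | (x, z) ∈ schemeTransp t ∧ (z, b) ∈ t}
          = {z : X | (x, z) ∈ schemeTransp t} := by
        ext z
        simp only [Set.mem_setOf_eq, and_iff_left_iff_imp]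
        intro h1
        have h2 : (z, x) ∈ t := mem_transp.mp h1
        rw [← hfix e he]
        exact ⟨x, h2, hb⟩
      rw [hset, natCard_row, ← val_eq_row (S.transpose_mem t htr) x, htval']
    obtain ⟨x⟩ := id hX
    set Ef := (Set.toFinite S.thinRadical).toFinset with hEf
    have hrEf : r ∉ Ef := fun h => hrE ((Set.Finite.mem_toFinset _).mp h)
    have hFrels : ∀ w ∈ insert r Ef, w ∈ S.rels := by
      intro w hw
      rcases Finset.mem_insert.mp hw with h | h
      · exact h ▸ hr.1
      · exact ((Set.Finite.mem_toFinset _).mp h).1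
    have hF := S.sum_a_val_le (S.transpose_mem t htr) htr (insert r Ef) hFrels x
    rw [Finset.sum_insert hrEf] at hF
    have hsumE : ∑ e ∈ Ef, S.a (schemeTransp t) t e * S.val e = p ^ 2 * p ^ 2 := by
      rw [Finset.sum_congr rfl (fun e he => by
        have heE : e ∈ S.thinRadical := (Set.Finite.mem_toFinset _).mp he
        rw [hae e heE, heE.2, mul_one])]
      rw [Finset.sum_const, smul_eq_mul, S.radical_card hX hrad]
    rw [hsumE, hrval, htval, htval'] at hF
    have har : 1 ≤ S.a (schemeTransp t) t r := Nat.one_le_iff_ne_zero.mpr hr.2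
    have hle : p ^ 2 ≤ S.a (schemeTransp t) t r * p ^ 2 :=
      Nat.le_mul_of_pos_left _ har
    have hpp : p ^ 2 * p ^ 2 = p ^ 2 * p ^ 2 := rfl
    have hpos : 0 < p ^ 2 := by positivity
    omega

lemma small_transp_self_sub_radical {p : ℕ} (hp : S.IsPScheme p) (hX : Nonempty X)
    (hval : ∀ t ∈ S.thinResidue, t ∉ S.thinRadical → S.val t = p ^ 2)
    {s : Set (X × X)} (hs : s ∈ S.rels) (hsmall : S.val s ≤ p) :
    S.cprod (schemeTransp s) s ⊆ S.thinRadical := by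
  classical
  intro r hr
  by_contra hrE
  have hrT : r ∈ S.thinResidue := S.cprod_transp_self_subset_residue hs hr
  have hrval := hval r hrT hrE
  obtain ⟨x⟩ := id hX
  have hsv' : S.val (schemeTransp s) = S.val s := S.val_transp hX hs
  have hadiag : S.a (schemeTransp s) s (schemeDiag X) = S.val s := by
    rw [S.a_spec _ (S.transpose_mem s hs) _ hs _ S.diag_mem x x rfl]
    have hset : {z : X | (x, z) ∈ schemeTransp s ∧ (z, x) ∈ s}
        = {z : X | (x, z) ∈ schemeTransp s} := by
      ext z
      simp only [Set.mem_setOf_eq, and_iff_left_iff_imp]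
      exact fun h => mem_transp.mp h
    rw [hset, natCard_row, ← val_eq_row (S.transpose_mem s hs) x, hsv']
  have hdne : ¬ (schemeDiag X = r) := fun h => hrE (h ▸ S.diag_mem_radical hX)
  have hFrels : ∀ w ∈ ({schemeDiag X, r} : Finset (Set (X × X))), w ∈ S.rels := by
    intro w hw
    rcases Finset.mem_insert.mp hw with h | h
    · exact h ▸ S.diag_mem
    · rw [Finset.mem_singleton] at h
      exact h ▸ hr.1
  have hF := S.sum_a_val_le (S.transpose_mem s hs) hs
    ({schemeDiag X, r} : Finset (Set (X × X))) hFrels x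
  rw [Finset.sum_pair hdne, hadiag, S.val_diag hX, hrval, hsv', mul_one] at hF
  have har : 1 ≤ S.a (schemeTransp s) s r := Nat.one_le_iff_ne_zero.mpr hr.2
  have h1 : S.val s * S.val s ≤ p * p := Nat.mul_le_mul hsmall hsmall
  have h2 : p ^ 2 ≤ S.a (schemeTransp s) s r * p ^ 2 := Nat.le_mul_of_pos_left _ har
  have hvpos : 1 ≤ S.val s := S.val_pos hp hs
  have hpp : p ^ 2 = p * p := by ring
  omega
lemma cprod_comm (hcomm : S.IsCommutative) {u v : Set (X × X)} (hu : u ∈ S.rels)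
    (hv : v ∈ S.rels) : S.cprod u v = S.cprod v u := by
  ext w
  simp only [mem_cprod]
  constructor
  · rintro ⟨h1, h2⟩
    exact ⟨h1, by rwa [hcomm u hu v hv w h1] at h2⟩
  · rintro ⟨h1, h2⟩
    exact ⟨h1, by rwa [← hcomm u hu v hv w h1] at h2⟩

lemma W_prod_closed {p : ℕ} (hp : S.IsPScheme p) (hX : Nonempty X)
    (hcomm : S.IsCommutative) {u v w : Set (X × X)}
    (hu : u ∈ S.rels) (hv : v ∈ S.rels)
    (hu2 : S.cprod (schemeTransp u) u ⊆ S.thinRadical)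
    (hv2 : S.cprod (schemeTransp v) v ⊆ S.thinRadical)
    (hw : w ∈ S.cprod u v) :
    S.cprod (schemeTransp w) w ⊆ S.thinRadical := by
  intro r hr
  have hwr : w ∈ S.rels := hw.1
  obtain ⟨x⟩ := id hX
  obtain ⟨b, hb⟩ := S.row_nonempty hp hr.1 x
  obtain ⟨z, hz1, hz2⟩ := S.exists_mid (S.transpose_mem w hwr) hwr hr.1 hr.2 hb
  have hza : (z, x) ∈ w := mem_transp.mp hz1
  obtain ⟨c, hc1, hc2⟩ := S.exists_mid hu hv hwr hw.2 hza
  obtain ⟨d, hd1, hd2⟩ := S.exists_mid hu hv hwr hw.2 hz2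
  obtain ⟨g, hg, hcd⟩ := S.exists_cprod_mem (S.transpose_mem u hu) hu
    (mem_transp.mpr hc1) hd1
  have hgE : g ∈ S.thinRadical := hu2 hg
  obtain ⟨m, hm, hcb⟩ := S.exists_cprod_mem hgE.1 hv hcd hd2
  rw [S.cprod_comm hcomm hgE.1 hv] at hm
  obtain ⟨q, hq1, hq2⟩ := S.exists_mid hv hgE.1 hm.1 hm.2 hcb
  obtain ⟨h, hh, haq⟩ := S.exists_cprod_mem (S.transpose_mem v hv) hv
    (mem_transp.mpr hc2) hq1
  have hhE : h ∈ S.thinRadical := hv2 hh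
  obtain ⟨r', hr', hab'⟩ := S.exists_cprod_mem hhE.1 hgE.1 haq hq2
  have heq : r = r' := S.rel_unique hr.1 (S.cprod_subset_rels _ _ hr') hb hab'
  rw [heq]
  exact S.radical_closed hp hX hhE hgE hr'

lemma nOrd_insert {u : Set (X × X)} {U : Set (Set (X × X))} (hu : u ∉ U) :
    S.nOrd (insert u U) = S.val u + S.nOrd U := by
  classical
  rw [nOrd_eq_sum, nOrd_eq_sum]
  have heq : (Set.toFinite (insert u U)).toFinset
      = insert u (Set.toFinite U).toFinset := by
    ext w
    rw [Set.Finite.mem_toFinset, Finset.mem_insert, Set.Finite.mem_toFinset]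
    exact Set.mem_insert_iff
  rw [heq, Finset.sum_insert (by rw [Set.Finite.mem_toFinset]; exact hu)]
end AssocScheme
/-- for a commutative p-scheme of order `p^4` with `n_{O_θ(S)} = p^2`,
`n_{O^θ(S)} = p^3` and `n_t = p^2` for all `t ∈ O^θ(S) ∖ O_θ(S)`, every relation
outside the thin residue has valency at least `p^2`. -/
theorem stmt13 {X : Type*} [Fintype X] (S : AssocScheme X) (p : ℕ)
    (hp : S.IsPScheme p) (hcomm : S.IsCommutative)
    (hcard : Fintype.card X = p ^ 4)
    (hrad : S.nOrd S.thinRadical = p ^ 2)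
    (hres : S.nOrd S.thinResidue = p ^ 3)
    (hval : ∀ t ∈ S.thinResidue, t ∉ S.thinRadical → S.val t = p ^ 2) :
    ∀ s ∈ S.rels, s ∉ S.thinResidue → p ^ 2 ≤ S.val s := by
  classical
  intro s hs hsT
  by_contra hlt
  have hp2 : 2 ≤ p := hp.1.two_le
  have hX : Nonempty X := by
    rw [← Fintype.card_pos_iff, hcard]
    positivity
  -- the valency of s is at most p
  have hsmall : S.val s ≤ p := by
    obtain ⟨i, hi⟩ := hp.2.2 s hs
    rcases le_or_gt i 1 with h | h
    · rw [hi]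
      calc p ^ i ≤ p ^ 1 := Nat.pow_le_pow_right (by omega) h
        _ = p := pow_one p
    · exact absurd (by rw [hi]; exact Nat.pow_le_pow_right (by omega) h) hlt
  -- the set of relations whose "transpose-square" lies in the thin radical
  set W : Set (Set (X × X)) :=
    {w | w ∈ S.rels ∧ S.cprod (schemeTransp w) w ⊆ S.thinRadical} with hW
  have hWsub : W ⊆ S.rels := fun w hw => hw.1
  have hTW : S.thinResidue ⊆ W := fun t ht =>
    ⟨S.residue_subset_rels ht, S.residue_transp_self_sub_radical hp hX hrad hres hval ht⟩
  have hsW : s ∈ W := ⟨hs, S.small_transp_self_sub_radical hp hX hval hs hsmall⟩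
  have hdW : schemeDiag X ∈ W := hTW (S.diag_mem_residue hX)
  have htrW : ∀ w ∈ W, schemeTransp w ∈ W := by
    intro w hw
    refine ⟨S.transpose_mem w hw.1, ?_⟩
    rw [AssocScheme.transp_transp, S.cprod_comm hcomm hw.1 (S.transpose_mem w hw.1)]
    exact hw.2
  have hclW : ∀ u ∈ W, ∀ v ∈ W, S.cprod u v ⊆ W := by
    intro u hu v hv w hw
    exact ⟨hw.1, S.W_prod_closed hp hX hcomm hu.1 hv.1 hu.2 hv.2 hw⟩
  have hdvd : S.nOrd W ∣ p ^ 4 := hcard ▸ S.nOrd_dvd_card hWsub hdW htrW hclW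
  -- the order of W exceeds p^3
  have hgt : p ^ 3 < S.nOrd W := by
    have hins : S.nOrd (insert s S.thinResidue) ≤ S.nOrd W := by
      refine S.nOrd_mono ?_
      intro u hu
      rcases Set.mem_insert_iff.mp hu with h | h
      · exact h ▸ hsW
      · exact hTW h
    rw [S.nOrd_insert hsT, hres] at hins
    have := S.val_pos hp hs
    omega
  -- hence the order of W is p^4 and W is everything
  have hW4 : S.nOrd W = p ^ 4 := by
    obtain ⟨i, hile, hieq⟩ := (Nat.dvd_prime_pow hp.1).mp hdvd
    have hgt' : 3 < i := by
      by_contra hcon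
      push_neg at hcon
      have : p ^ i ≤ p ^ 3 := Nat.pow_le_pow_right (by omega) hcon
      omega
    have : i = 4 := by omega
    rw [hieq, this]
  have hWrels : S.rels ⊆ W := by
    by_contra hx
    rw [Set.not_subset] at hx
    obtain ⟨u, hu, huW⟩ := hx
    have hins : S.nOrd (insert u W) ≤ S.nOrd S.rels := by
      refine S.nOrd_mono ?_
      intro v hv
      rcases Set.mem_insert_iff.mp hv with h | h
      · exact h ▸ hu
      · exact hWsub h
    rw [S.nOrd_insert huW, hW4, S.nOrd_rels_eq_card hX, hcard] at hins
    have := S.val_pos hp hu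
    omega
  -- now the thin radical is a member of the defining family of the thin residue
  have hfam : S.thinResidue ⊆ S.thinRadical := by
    intro t ht
    refine Set.mem_sInter.mp ht S.thinRadical
      ⟨⟨⟨schemeDiag X, S.diag_mem_radical hX⟩, fun e he => he.1,
        fun e he f hf => S.radical_closed hp hX he hf⟩, ?_⟩
    intro g hg
    exact (hWrels hg).2
  have hle : p ^ 3 ≤ p ^ 2 := by
    have := S.nOrd_mono hfam
    rwa [hres, hrad] at this
  have hlt2 : p ^ 2 < p ^ 3 := Nat.pow_lt_pow_right (by omega) (by omega)
  omega
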